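/- Let v = (v_0,…,v_{n−1}) and w = (w_0,…,w_{n−1}) be two simple configurations of the same open polygonal chain in ℝ³, i.e. ‖v_{i+1} − v_i‖ = ‖w_{i+1} − w_i‖ for all 0 ≤ i ≤ n−2. If both configurations can be straightened, then there is a motion from v to w: a continuous family of simple configurations on [0,1], preserving all edge lengths, starting at v and ending at w. -/

import Mathlib

open scoped EuclideanGeometry RealInnerProductSpace

noncomputable section

abbrev E2 : Type := EuclideanSpace ℝ (Fin 2)
abbrev E3 : Type := EuclideanSpace ℝ (Fin 3)

/-- Simplicity of an open polygonal chain with vertices `v 0, …, v (n-1)`: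
nonadjacent edges are disjoint, adjacent edges meet exactly in their common vertex. -/
def IsSimpleOpenChain {E : Type*} [NormedAddCommGroup E] [NormedSpace ℝ E]
    (n : ℕ) (v : ℕ → E) : Prop :=
  (∀ i j : ℕ, i + 1 < n → j + 1 < n → i + 2 ≤ j →
    Disjoint (segment ℝ (v i) (v (i+1))) (segment ℝ (v j) (v (j+1)))) ∧
  ∀ i : ℕ, i + 2 < n →
    segment ℝ (v i) (v (i+1)) ∩ segment ℝ (v (i+1)) (v (i+2)) = {v (i+1)}

/-- A motion of an open chain: continuous on `[0,1]`, starting at `v`,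
preserving all edge lengths and simplicity. -/
def IsChainMotion {E : Type*} [NormedAddCommGroup E] [NormedSpace ℝ E]
    (n : ℕ) (v : ℕ → E) (f : ℝ → ℕ → E) : Prop :=
  (∀ i < n, ContinuousOn (fun t => f t i) (Set.Icc (0:ℝ) 1)) ∧
  (∀ i < n, f 0 i = v i) ∧
  (∀ t ∈ Set.Icc (0:ℝ) 1, ∀ i : ℕ, i + 1 < n →
    dist (f t (i+1)) (f t i) = dist (v (i+1)) (v i)) ∧
  (∀ t ∈ Set.Icc (0:ℝ) 1, IsSimpleOpenChain n (f t))

/-- The chain can be straightened: some motion ends with all vertices collinear. -/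
def CanStraighten {E : Type*} [NormedAddCommGroup E] [NormedSpace ℝ E]
    (n : ℕ) (v : ℕ → E) : Prop :=
  ∃ f : ℝ → ℕ → E, IsChainMotion n v f ∧ Collinear ℝ (f 1 '' {i | i < n})

/-- If two simple configurations of the same open chain in
`ℝ³` (equal corresponding edge lengths) can both be straightened, then there is
a motion (continuous, edge-length-preserving, simplicity-preserving) taking the
first configuration to the second. -/
lemma simple_congr {E : Type*} [NormedAddCommGroup E] [NormedSpace ℝ E]
    {n : ℕ} {u u' : ℕ → E} (h : ∀ i < n, u i = u' i)
    (hs : IsSimpleOpenChain n u) : IsSimpleOpenChain n u' := by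
  obtain ⟨h1, h2⟩ := hs
  constructor
  · intro i j hi hj hij
    rw [← h i (by omega), ← h (i+1) (by omega), ← h j (by omega), ← h (j+1) (by omega)]
    exact h1 i j hi hj hij
  · intro i hi
    rw [← h i (by omega), ← h (i+1) (by omega), ← h (i+2) (by omega)]
    exact h2 i hi

lemma simple_comp_affine {E F : Type*} [NormedAddCommGroup E] [NormedSpace ℝ E]
    [NormedAddCommGroup F] [NormedSpace ℝ F]
    (A : E →ᵃ[ℝ] F) (hA : Function.Injective A) {n : ℕ} {c : ℕ → E} :
    IsSimpleOpenChain n (fun i => A (c i)) ↔ IsSimpleOpenChain n c := by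
  have hseg : ∀ a b : E, segment ℝ (A a) (A b) = A '' segment ℝ a b :=
    fun a b => (image_segment ℝ A a b).symm
  constructor
  · rintro ⟨h1, h2⟩
    constructor
    · intro i j hi hj hij
      have := h1 i j hi hj hij
      simp only [hseg, Set.disjoint_image_iff hA] at this
      exact this
    · intro i hi
      have := h2 i hi
      simp only [hseg] at this
      apply Set.image_injective.mpr hA
      rw [Set.image_inter hA, Set.image_singleton]
      exact this
  · rintro ⟨h1, h2⟩
    constructor
    · intro i j hi hj hij
      simp only [hseg, Set.disjoint_image_iff hA]
      exact h1 i j hi hj hij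
    · intro i hi
      simp only [hseg]
      rw [← Set.image_inter hA, h2 i hi, Set.image_singleton]

lemma core_real {n : ℕ} {b : ℕ → ℝ} (hb : IsSimpleOpenChain n b) :
    ∀ d i j, i < j → j + 1 < n → j = i + d →
      (b (i+1) - b i) * (b (j+1) - b j) < 0 → False := by
  intro d
  induction d using Nat.strong_induction_on with
  | _ d IH =>
  intro i j hij hjn hjd hprod
  rcases Nat.lt_or_ge (i+1) j with hgap | hadj
  · -- j ≥ i + 2
    by_cases hmid : ∀ k, i < k → k < j → b k = b (k+1)
    · have hconst : ∀ k, i+1 ≤ k → k ≤ j → b k = b (i+1) := by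
        intro k hk1 hk2
        induction k with
        | zero => omega
        | succ k IHk =>
          rcases Nat.eq_or_lt_of_le hk1 with he | hlt
          · rw [← he]
          · have hk : b k = b (k+1) := hmid k (by omega) (by omega)
            rw [← hk]
            exact IHk (by omega) (by omega)
      have heq : b j = b (i+1) := hconst j (by omega) le_rfl
      have hd := hb.1 i j (by omega) (by omega) (by omega)
      refine Set.disjoint_left.mp hd (right_mem_segment ℝ _ _) ?_
      rw [← heq]
      exact left_mem_segment ℝ _ _
    · push_neg at hmid
      obtain ⟨k, hki, hkj, hkne⟩ := hmid
      rcases lt_trichotomy ((b (i+1) - b i) * (b (k+1) - b k)) 0 with h1 | h1 | h1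
      · exact IH (k - i) (by omega) i k (by omega) (by omega) (by omega) h1
      · rcases mul_eq_zero.mp h1 with h2 | h2
        · rw [h2, zero_mul] at hprod
          exact lt_irrefl 0 hprod
        · exact hkne (by linarith [sub_eq_zero.mp h2])
      · have h3 : (b (k+1) - b k) * (b (j+1) - b j) < 0 := by
          rcases mul_pos_iff.mp h1 with ⟨hp, hq⟩ | ⟨hp, hq⟩ <;>
            rcases mul_neg_iff.mp hprod with ⟨hp', hr⟩ | ⟨hp', hr⟩
          · exact mul_neg_of_pos_of_neg hq hr
          · linarith
          · linarith
          · exact mul_neg_of_neg_of_pos hq hr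
        exact IH (j - k) (by omega) k j (by omega) hjn (by omega) h3
  · -- j = i + 1
    have hji : j = i + 1 := by omega
    subst hji
    have hadj2 := hb.2 i (by omega)
    have e : i + 1 + 1 = i + 2 := rfl
    rw [e] at hprod
    rcases mul_neg_iff.mp hprod with ⟨h1, h2⟩ | ⟨h1, h2⟩
    · have hx : b i < b (i+1) := by linarith
      have hz : b (i+2) < b (i+1) := by linarith
      have hm : max (b i) (b (i+2)) ∈
          segment ℝ (b i) (b (i+1)) ∩ segment ℝ (b (i+1)) (b (i+2)) := by
        constructor
        · rw [segment_eq_Icc hx.le]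
          exact ⟨le_max_left _ _, (max_lt hx hz).le⟩
        · rw [segment_symm, segment_eq_Icc hz.le]
          exact ⟨le_max_right _ _, (max_lt hx hz).le⟩
      rw [hadj2] at hm
      exact absurd (Set.mem_singleton_iff.mp hm) (max_lt hx hz).ne
    · have hx : b (i+1) < b i := by linarith
      have hz : b (i+1) < b (i+2) := by linarith
      have hm : min (b i) (b (i+2)) ∈
          segment ℝ (b i) (b (i+1)) ∩ segment ℝ (b (i+1)) (b (i+2)) := by
        constructor
        · rw [segment_symm, segment_eq_Icc hx.le]
          exact ⟨(lt_min hx hz).le, min_le_left _ _⟩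
        · rw [segment_eq_Icc hz.le]
          exact ⟨(lt_min hx hz).le, min_le_right _ _⟩
      rw [hadj2] at hm
      exact absurd (Set.mem_singleton_iff.mp hm) (lt_min hx hz).ne'

lemma mono_of_simple {n : ℕ} {b : ℕ → ℝ} (hb : IsSimpleOpenChain n b) :
    (∀ i, i + 1 < n → b i ≤ b (i+1)) ∨ (∀ i, i + 1 < n → b (i+1) ≤ b i) := by
  by_contra hcon
  push_neg at hcon
  obtain ⟨⟨i, hi, hib⟩, j, hj, hjb⟩ := hcon
  rcases Nat.lt_trichotomy i j with h | h | h
  · exact core_real hb (j - i) i j h hj (by omega)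
      (mul_neg_of_neg_of_pos (by linarith) (by linarith))
  · subst h; linarith
  · exact core_real hb (i - j) j i h hi (by omega)
      (mul_neg_of_pos_of_neg (by linarith) (by linarith))

lemma simple_line_iff {n : ℕ} (c : ℕ → ℝ) (q e : E3) (he : e ≠ 0) :
    IsSimpleOpenChain n (fun i => q + c i • e) ↔ IsSimpleOpenChain n c := by
  have h1 : Function.Injective (AffineMap.lineMap q (q + e) : ℝ →ᵃ[ℝ] E3) := by
    intro a b hab
    simp only [AffineMap.lineMap_apply, vsub_eq_sub, vadd_eq_add, add_sub_cancel_left] at hab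
    exact smul_left_injective ℝ he (add_right_cancel hab)
  have h2 : (fun i => q + c i • e) =
      fun i => (AffineMap.lineMap q (q + e) : ℝ →ᵃ[ℝ] E3) (c i) := by
    funext i
    simp only [AffineMap.lineMap_apply, vsub_eq_sub, vadd_eq_add, add_sub_cancel_left]
    abel
  rw [h2, simple_comp_affine _ h1]

lemma straight_rep {n : ℕ} {u : ℕ → E3} (hs : IsSimpleOpenChain n u)
    (hc : Collinear ℝ (u '' {i | i < n})) :
    ∃ d : E3, ‖d‖ = 1 ∧
      ∀ i < n, u i = u 0 + (∑ k ∈ Finset.range i, dist (u (k+1)) (u k)) • d := by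
  have hd0 : ‖(EuclideanSpace.single (0 : Fin 3) (1:ℝ) : E3)‖ = 1 := by
    simp [EuclideanSpace.norm_single]
  rcases Nat.eq_zero_or_pos n with hn | hn
  · exact ⟨_, hd0, fun i hi => absurd hi (by omega)⟩
  · have h0 : u 0 ∈ u '' {i | i < n} := ⟨0, hn, rfl⟩
    rw [collinear_iff_of_mem h0] at hc
    obtain ⟨e, he⟩ := hc
    by_cases he0 : e = 0
    · refine ⟨_, hd0, ?_⟩
      have hall : ∀ i < n, u i = u 0 := by
        intro i hi
        obtain ⟨r, hr⟩ := he (u i) ⟨i, hi, rfl⟩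
        simpa [he0] using hr
      intro i hi
      have hz : ∀ k ∈ Finset.range i, dist (u (k+1)) (u k) = 0 := by
        intro k hk
        rw [Finset.mem_range] at hk
        rw [hall (k+1) (by omega), hall k (by omega), dist_self]
      rw [Finset.sum_congr rfl hz, Finset.sum_const_zero, zero_smul, add_zero]
      exact hall i hi
    · set d : E3 := ‖e‖⁻¹ • e with hd_def
      have hne : ‖e‖ ≠ 0 := norm_ne_zero_iff.mpr he0
      have hd1 : ‖d‖ = 1 := by
        rw [hd_def, norm_smul, norm_inv, norm_norm, inv_mul_cancel₀ hne]
      have hdz : d ≠ 0 := by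
        intro h; rw [h, norm_zero] at hd1; exact one_ne_zero hd1.symm
      have hrep : ∀ i, ∃ r : ℝ, i < n → u i = u 0 + r • d := by
        intro i
        by_cases hi : i < n
        · obtain ⟨r, hr⟩ := he (u i) ⟨i, hi, rfl⟩
          refine ⟨r * ‖e‖, fun _ => ?_⟩
          have hsm : (r * ‖e‖) • d = r • e := by
            rw [hd_def, smul_smul]
            congr 1
            field_simp
          rw [hr, vadd_eq_add, hsm]
          abel
        · exact ⟨0, fun h => absurd h hi⟩
      choose b hb using hrep
      have hbs : IsSimpleOpenChain n b :=
        (simple_line_iff b (u 0) d hdz).mp (simple_congr (fun i hi => hb i hi) hs)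
      have hb0 : b 0 = 0 := by
        have h1 := hb 0 hn
        have h2 : b 0 • d = 0 := (left_eq_add.mp h1)
        rcases smul_eq_zero.mp h2 with h3 | h3
        · exact h3
        · exact absurd h3 hdz
      have hdist : ∀ k, k + 1 < n → dist (u (k+1)) (u k) = |b (k+1) - b k| := by
        intro k hk
        rw [hb (k+1) hk, hb k (by omega), dist_eq_norm]
        have h5 : (u 0 + b (k+1) • d) - (u 0 + b k • d) = (b (k+1) - b k) • d := by
          module
        rw [h5, norm_smul, hd1, mul_one, Real.norm_eq_abs]
      rcases mono_of_simple hbs with hmono | hmono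
      · refine ⟨d, hd1, fun i hi => ?_⟩
        have hsum : ∑ k ∈ Finset.range i, dist (u (k+1)) (u k) = b i := by
          calc ∑ k ∈ Finset.range i, dist (u (k+1)) (u k)
              = ∑ k ∈ Finset.range i, (b (k+1) - b k) :=
                Finset.sum_congr rfl (fun k hk => by
                  rw [Finset.mem_range] at hk
                  rw [hdist k (by omega),
                    abs_of_nonneg (sub_nonneg.mpr (hmono k (by omega)))])
            _ = b i - b 0 := Finset.sum_range_sub b i
            _ = b i := by rw [hb0, sub_zero]
        rw [hsum]
        exact hb i hi
      · refine ⟨-d, by rw [norm_neg]; exact hd1, fun i hi => ?_⟩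
        have hsum : ∑ k ∈ Finset.range i, dist (u (k+1)) (u k) = - b i := by
          calc ∑ k ∈ Finset.range i, dist (u (k+1)) (u k)
              = ∑ k ∈ Finset.range i, -(b (k+1) - b k) :=
                Finset.sum_congr rfl (fun k hk => by
                  rw [Finset.mem_range] at hk
                  rw [hdist k (by omega),
                    abs_of_nonpos (by linarith [hmono k (by omega)] : b (k+1) - b k ≤ 0)])
            _ = -(b i - b 0) := by rw [← Finset.sum_range_sub b i, Finset.sum_neg_distrib]
            _ = - b i := by rw [hb0, sub_zero]
        rw [hsum, hb i hi]
        congr 1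
        rw [neg_smul, smul_neg, neg_neg]

lemma motion_reverse {E : Type*} [NormedAddCommGroup E] [NormedSpace ℝ E]
    {n : ℕ} {v : ℕ → E} {f : ℝ → ℕ → E} (hf : IsChainMotion n v f) :
    IsChainMotion n (f 1) (fun t => f (1 - t)) := by
  obtain ⟨hfc, hf0, hfl, hfs⟩ := hf
  refine ⟨?_, ?_, ?_, ?_⟩
  · intro i hi
    exact (hfc i hi).comp ((continuous_const.sub continuous_id).continuousOn)
      (fun t ht => ⟨by linarith [ht.2], by linarith [ht.1]⟩)
  · intro i hi
    show f (1 - 0) i = f 1 i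
    norm_num
  · intro t ht i hi
    show dist (f (1-t) (i+1)) (f (1-t) i) = _
    rw [hfl (1-t) ⟨by linarith [ht.2], by linarith [ht.1]⟩ i hi,
      ← hfl 1 ⟨zero_le_one, le_rfl⟩ i hi]
  · intro t ht
    exact hfs (1-t) ⟨by linarith [ht.2], by linarith [ht.1]⟩

lemma motion_trans {E : Type*} [NormedAddCommGroup E] [NormedSpace ℝ E] {n : ℕ}
    {v v₂ : ℕ → E} {f g : ℝ → ℕ → E} (hf : IsChainMotion n v f) (hg : IsChainMotion n v₂ g)
    (hconn : ∀ i < n, f 1 i = g 0 i) :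
    ∃ F : ℝ → ℕ → E, IsChainMotion n v F ∧ ∀ i < n, F 1 i = g 1 i := by
  obtain ⟨hfc, hf0, hfl, hfs⟩ := hf
  obtain ⟨hgc, hg0, hgl, hgs⟩ := hg
  set cl : ℝ → ℝ := fun t => min 1 (max 0 t) with hcl
  have hclc : Continuous cl :=
    Continuous.min continuous_const (Continuous.max continuous_const continuous_id)
  have hclm : ∀ t, cl t ∈ Set.Icc (0:ℝ) 1 :=
    fun t => ⟨le_min zero_le_one (le_max_left _ _), min_le_left _ _⟩
  have hcli : ∀ t, 0 ≤ t → t ≤ 1 → cl t = t := by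
    intro t h0 h1
    simp [hcl, max_eq_right h0, min_eq_right h1]
  refine ⟨fun t i => if t ≤ 1/2 then f (cl (2*t)) i else g (cl (2*t - 1)) i,
    ⟨?_, ?_, ?_, ?_⟩, ?_⟩
  · intro i hi
    apply Continuous.continuousOn
    show Continuous fun t => if t ≤ 1/2 then f (cl (2*t)) i else g (cl (2*t - 1)) i
    apply Continuous.if_le _ _ continuous_id continuous_const
    · intro t (ht : t = 1/2)
      subst ht
      have e1 : (2:ℝ) * (1/2) = 1 := by norm_num
      have e2 : (2:ℝ) * (1/2) - 1 = 0 := by norm_num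
      rw [e2, e1, hcli 1 zero_le_one le_rfl, hcli 0 le_rfl zero_le_one]
      exact hconn i hi
    · exact (hfc i hi).comp_continuous
        (hclc.comp (continuous_const.mul continuous_id)) (fun t => hclm _)
    · exact (hgc i hi).comp_continuous
        (hclc.comp ((continuous_const.mul continuous_id).sub continuous_const))
        (fun t => hclm _)
  · intro i hi
    show (if (0:ℝ) ≤ 1/2 then f (cl (2*0)) i else g (cl (2*0 - 1)) i) = v i
    rw [if_pos (by norm_num : (0:ℝ) ≤ 1/2), (by norm_num : (2:ℝ)*0 = 0),
      hcli 0 le_rfl zero_le_one]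
    exact hf0 i hi
  · intro t ht i hi
    show dist (if t ≤ 1/2 then f (cl (2*t)) (i+1) else g (cl (2*t - 1)) (i+1))
      (if t ≤ 1/2 then f (cl (2*t)) i else g (cl (2*t - 1)) i) = _
    split_ifs with h
    · exact hfl (cl (2*t)) (hclm _) i hi
    · rw [hgl (cl (2*t-1)) (hclm _) i hi,
        ← hgl 0 ⟨le_rfl, zero_le_one⟩ i hi,
        ← hconn (i+1) (by omega), ← hconn i (by omega)]
      exact hfl 1 ⟨zero_le_one, le_rfl⟩ i hi
  · intro t ht
    show IsSimpleOpenChain n (fun i => if t ≤ 1/2 then f (cl (2*t)) i else g (cl (2*t - 1)) i)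
    by_cases h : t ≤ 1/2
    · simp only [if_pos h]
      exact hfs _ (hclm _)
    · simp only [if_neg h]
      exact hgs _ (hclm _)
  · intro i hi
    show (if (1:ℝ) ≤ 1/2 then f (cl (2*1)) i else g (cl (2*1 - 1)) i) = g 1 i
    rw [if_neg (by norm_num : ¬ (1:ℝ) ≤ 1/2), (by norm_num : (2:ℝ)*1 - 1 = 1),
      hcli 1 zero_le_one le_rfl]

lemma bridge_motion (n : ℕ) (u₁ u₂ : ℕ → E3) (s : ℕ → ℝ) (q₁ q₂ d₁ d₂ : E3)
    (hd₁ : ‖d₁‖ = 1) (hd₂ : ‖d₂‖ = 1)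
    (h₁ : ∀ i < n, u₁ i = q₁ + s i • d₁) (h₂ : ∀ i < n, u₂ i = q₂ + s i • d₂)
    (hss : IsSimpleOpenChain n s) :
    ∃ h : ℝ → ℕ → E3, IsChainMotion n u₁ h ∧ ∀ i < n, h 1 i = u₂ i := by
  have hrank : 1 < Module.rank ℝ E3 := by
    rw [← Module.finrank_eq_rank, finrank_euclideanSpace_fin]
    exact_mod_cast (by norm_num : (1:ℕ) < 3)
  obtain ⟨γ, hγ⟩ := (isPathConnected_sphere hrank (0:E3) zero_le_one).joinedIn d₁
    (by simpa [mem_sphere_zero_iff_norm] using hd₁) d₂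
    (by simpa [mem_sphere_zero_iff_norm] using hd₂)
  have hnorm : ∀ t ∈ Set.Icc (0:ℝ) 1, ‖γ.extend t‖ = 1 := by
    intro t ht
    rw [γ.extend_apply ht]
    exact mem_sphere_zero_iff_norm.mp (hγ _)
  refine ⟨fun t i => (q₁ + t • (q₂ - q₁)) + s i • γ.extend t, ⟨?_, ?_, ?_, ?_⟩, ?_⟩
  · intro i hi
    apply Continuous.continuousOn
    exact (continuous_const.add (continuous_id.smul continuous_const)).add
      (γ.continuous_extend.const_smul (s i))
  · intro i hi
    show (q₁ + (0:ℝ) • (q₂ - q₁)) + s i • γ.extend 0 = u₁ i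
    rw [Path.extend_zero, h₁ i hi]
    module
  · intro t ht i hi
    show dist ((q₁ + t • (q₂ - q₁)) + s (i+1) • γ.extend t)
      ((q₁ + t • (q₂ - q₁)) + s i • γ.extend t) = dist (u₁ (i+1)) (u₁ i)
    rw [h₁ (i+1) (by omega), h₁ i (by omega), dist_eq_norm, dist_eq_norm]
    have e1 : ((q₁ + t • (q₂ - q₁)) + s (i+1) • γ.extend t) -
        ((q₁ + t • (q₂ - q₁)) + s i • γ.extend t) = (s (i+1) - s i) • γ.extend t := by
      module
    have e2 : (q₁ + s (i+1) • d₁) - (q₁ + s i • d₁) = (s (i+1) - s i) • d₁ := by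
      module
    rw [e1, e2, norm_smul, norm_smul, hnorm t ht, hd₁]
  · intro t ht
    have hne : γ.extend t ≠ 0 := by
      intro h0
      have h5 := hnorm t ht
      rw [h0, norm_zero] at h5
      exact one_ne_zero h5.symm
    exact (simple_line_iff s (q₁ + t • (q₂ - q₁)) (γ.extend t) hne).mpr hss
  · intro i hi
    show (q₁ + (1:ℝ) • (q₂ - q₁)) + s i • γ.extend 1 = u₂ i
    rw [Path.extend_one, h₂ i hi]
    module

theorem motion_between_unlocked_configurations (n : ℕ) (v w : ℕ → E3)
    (hv : IsSimpleOpenChain n v) (hw : IsSimpleOpenChain n w)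
    (hlen : ∀ i : ℕ, i + 1 < n → dist (v (i+1)) (v i) = dist (w (i+1)) (w i))
    (hvs : CanStraighten n v) (hws : CanStraighten n w) :
    ∃ f : ℝ → ℕ → E3, IsChainMotion n v f ∧ ∀ i < n, f 1 i = w i := by
  obtain ⟨f, hf, hfcol⟩ := hvs
  obtain ⟨g, hg, hgcol⟩ := hws
  have h1 : (1:ℝ) ∈ Set.Icc (0:ℝ) 1 := ⟨zero_le_one, le_rfl⟩
  have hf1s : IsSimpleOpenChain n (f 1) := hf.2.2.2 1 h1
  have hg1s : IsSimpleOpenChain n (g 1) := hg.2.2.2 1 h1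
  obtain ⟨d₁, hd₁, hrep₁⟩ := straight_rep hf1s hfcol
  obtain ⟨d₂, hd₂, hrep₂⟩ := straight_rep hg1s hgcol
  have hrep₁' : ∀ i < n,
      f 1 i = f 1 0 + (∑ k ∈ Finset.range i, dist (v (k+1)) (v k)) • d₁ := by
    intro i hi
    rw [hrep₁ i hi]
    have hsum : (∑ k ∈ Finset.range i, dist (f 1 (k+1)) (f 1 k)) =
        ∑ k ∈ Finset.range i, dist (v (k+1)) (v k) :=
      Finset.sum_congr rfl fun k hk => by
        rw [Finset.mem_range] at hk
        exact hf.2.2.1 1 h1 k (by omega)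
    rw [hsum]
  have hrep₂' : ∀ i < n,
      g 1 i = g 1 0 + (∑ k ∈ Finset.range i, dist (v (k+1)) (v k)) • d₂ := by
    intro i hi
    rw [hrep₂ i hi]
    have hsum : (∑ k ∈ Finset.range i, dist (g 1 (k+1)) (g 1 k)) =
        ∑ k ∈ Finset.range i, dist (v (k+1)) (v k) :=
      Finset.sum_congr rfl fun k hk => by
        rw [Finset.mem_range] at hk
        exact (hg.2.2.1 1 h1 k (by omega)).trans (hlen k (by omega)).symm
    rw [hsum]
  have hd₁0 : d₁ ≠ 0 := by
    intro h0
    rw [h0, norm_zero] at hd₁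
    exact one_ne_zero hd₁.symm
  have hss : IsSimpleOpenChain n (fun i => ∑ k ∈ Finset.range i, dist (v (k+1)) (v k)) :=
    (simple_line_iff _ (f 1 0) d₁ hd₁0).mp (simple_congr (fun i hi => hrep₁' i hi) hf1s)
  obtain ⟨h, hh, hh1⟩ := bridge_motion n (f 1) (g 1)
    (fun i => ∑ k ∈ Finset.range i, dist (v (k+1)) (v k)) (f 1 0) (g 1 0) d₁ d₂ hd₁ hd₂
    (fun i hi => hrep₁' i hi) (fun i hi => hrep₂' i hi) hss
  obtain ⟨F₁, hF₁, hF₁1⟩ := motion_trans hf hh (fun i hi => (hh.2.1 i hi).symm)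
  obtain ⟨F, hF, hF1⟩ := motion_trans hF₁ (motion_reverse hg) (fun i hi => by
    show F₁ 1 i = g (1 - 0) i
    rw [(by norm_num : (1:ℝ) - 0 = 1), hF₁1 i hi, hh1 i hi])
  refine ⟨F, hF, fun i hi => ?_⟩
  rw [hF1 i hi]
  show g (1 - 1) i = w i
  rw [(by norm_num : (1:ℝ) - 1 = 0)]
  exact hg.2.1 i hi
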